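/- arXiv:0710.0857 — 3 statements merged into one kernel-verified Lean document; each statement's English description precedes it below -/
import Mathlib

section
/- If ξ is exponentially distributed with rate λ > 0, then the stationary distribution function of the Markov chain x ↦ max(1-x, 1-ξ) on [0,1] is F(x) = (e^{λx} - 1)/(e^{λ} - 1). -/
open MeasureTheory ProbabilityTheory

/-- If the CDF of `Y` agrees with a continuous function on `[0, t]` with `t > 0`,
then `Y` has no atom at `t`. -/
lemma cdf_no_atom {Ω : Type*} [MeasurableSpace Ω] (μ : Measure Ω) [IsProbabilityMeasure μ]
    (Y : Ω → ℝ) (hY : Measurable Y) (t : ℝ) (ht : 0 < t) (g : ℝ → ℝ) (hg : Continuous g)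
    (hcdf : ∀ s, 0 ≤ s → s ≤ t → (μ {ω | Y ω ≤ s}).toReal = g s) :
    μ {ω | Y ω = t} = 0 := by
  have hkey : ∀ δ > (0:ℝ), (μ {ω | Y ω = t}).toReal < δ := by
    intro δ hδ
    obtain ⟨ε, hε, hεδ⟩ := Metric.continuousAt_iff.mp (hg.continuousAt (x := t)) δ hδ
    set s : ℝ := max 0 (t - ε/2) with hs
    have hs0 : 0 ≤ s := le_max_left _ _
    have hst : s < t := max_lt ht (by linarith)
    have hdist : dist s t < ε := by
      rw [Real.dist_eq, abs_of_nonpos (by linarith)]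
      have : t - ε/2 ≤ s := le_max_right _ _
      linarith
    have hgs : g t - g s < δ := by
      have := hεδ hdist
      rw [Real.dist_eq] at this
      have := abs_lt.mp this
      linarith [this.1]
    have hsub : {ω | Y ω ≤ s} ⊆ {ω | Y ω ≤ t} := fun ω h => le_trans h hst.le
    have hmono : {ω | Y ω = t} ⊆ {ω | Y ω ≤ t} \ {ω | Y ω ≤ s} := by
      intro ω hω
      simp only [Set.mem_setOf_eq] at hω
      exact ⟨le_of_eq hω, by simp only [Set.mem_setOf_eq, hω]; linarith⟩
    have hdiff : (μ ({ω | Y ω ≤ t} \ {ω | Y ω ≤ s})).toReal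
        = (μ {ω | Y ω ≤ t}).toReal - (μ {ω | Y ω ≤ s}).toReal := by
      rw [measure_diff hsub (hY measurableSet_Iic).nullMeasurableSet (measure_ne_top μ _),
        ENNReal.toReal_sub_of_le (measure_mono hsub) (measure_ne_top μ _)]
    have hle : (μ {ω | Y ω = t}).toReal ≤ (μ ({ω | Y ω ≤ t} \ {ω | Y ω ≤ s})).toReal :=
      ENNReal.toReal_le_toReal (measure_ne_top μ _) (measure_ne_top μ _)
        |>.mpr (measure_mono hmono)
    calc (μ {ω | Y ω = t}).toReal ≤ _ := hle
      _ = (μ {ω | Y ω ≤ t}).toReal - (μ {ω | Y ω ≤ s}).toReal := hdiff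
      _ = g t - g s := by rw [hcdf t ht.le le_rfl, hcdf s hs0 hst.le]
      _ < δ := hgs
  have h0 : (μ {ω | Y ω = t}).toReal = 0 := by
    by_contra h
    have hpos : 0 < (μ {ω | Y ω = t}).toReal :=
      lt_of_le_of_ne ENNReal.toReal_nonneg (Ne.symm h)
    exact absurd (hkey _ hpos) (lt_irrefl _)
  rwa [ENNReal.toReal_eq_zero_iff, or_iff_left (measure_ne_top μ _)] at h0

lemma meas_lt_eq_meas_le {Ω : Type*} [MeasurableSpace Ω] (μ : Measure Ω)
    (Y : Ω → ℝ) (t : ℝ) (hatom : μ {ω | Y ω = t} = 0) :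
    μ {ω | Y ω < t} = μ {ω | Y ω ≤ t} := by
  refine le_antisymm (measure_mono fun ω (h : Y ω < t) => (le_of_lt h : Y ω ≤ t)) ?_
  have : {ω | Y ω ≤ t} ⊆ {ω | Y ω < t} ∪ {ω | Y ω = t} := by
    intro ω (hω : Y ω ≤ t)
    rcases lt_or_eq_of_le hω with h | h
    · exact Or.inl h
    · exact Or.inr h
  calc μ {ω | Y ω ≤ t} ≤ μ ({ω | Y ω < t} ∪ {ω | Y ω = t}) := measure_mono this
    _ ≤ μ {ω | Y ω < t} + μ {ω | Y ω = t} := measure_union_le _ _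
    _ = μ {ω | Y ω < t} := by rw [hatom, add_zero]

theorem stmt_7 {Ω : Type*} [MeasurableSpace Ω] (μ : Measure Ω) [IsProbabilityMeasure μ]
    (lam : ℝ) (hlam : 0 < lam)
    (ξ X : Ω → ℝ) (hξm : Measurable ξ) (hXm : Measurable X)
    (hξpos : ∀ᵐ ω ∂μ, 0 < ξ ω)
    (hξcdf : ∀ x : ℝ, 0 ≤ x → (μ {ω | ξ ω ≤ x}).toReal = 1 - Real.exp (-lam * x))
    (F : ℝ → ℝ)
    (hF : ∀ x, F x = (Real.exp (lam * x) - 1) / (Real.exp lam - 1))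
    (hX01 : ∀ᵐ ω ∂μ, X ω ∈ Set.Icc (0 : ℝ) 1)
    (hXF : ∀ x ∈ Set.Icc (0 : ℝ) 1, (μ {ω | X ω ≤ x}).toReal = F x)
    (hindep : IndepFun X ξ μ) :
    ∀ x ∈ Set.Icc (0 : ℝ) 1,
      (μ {ω | max (1 - X ω) (1 - ξ ω) ≤ x}).toReal = F x := by
  intro x hx
  obtain ⟨hx0, hx1⟩ := hx
  set t : ℝ := 1 - x with htdef
  have ht0 : 0 ≤ t := by simp [htdef]; linarith
  have ht1 : t ≤ 1 := by simp [htdef]; linarith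
  have hexp1 : (1:ℝ) < Real.exp lam := by
    calc (1:ℝ) = Real.exp 0 := by rw [Real.exp_zero]
    _ < Real.exp lam := Real.exp_lt_exp.mpr hlam
  have hden : Real.exp lam - 1 ≠ 0 := by linarith
  -- continuity of F
  have hFc : Continuous F := by
    have : F = fun y => (Real.exp (lam * y) - 1) / (Real.exp lam - 1) := funext hF
    rw [this]
    exact ((Real.continuous_exp.comp (continuous_const.mul continuous_id)).sub
      continuous_const).div_const _
  -- atoms are zero
  have atomX : μ {ω | X ω = t} = 0 := by
    rcases eq_or_lt_of_le ht0 with h0 | h0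
    · -- t = 0
      have hle0 : (μ {ω | X ω ≤ (0:ℝ)}).toReal = 0 := by
        rw [hXF 0 ⟨le_rfl, zero_le_one⟩, hF]
        simp
      have hle0' : μ {ω | X ω ≤ (0:ℝ)} = 0 := by
        rwa [ENNReal.toReal_eq_zero_iff, or_iff_left (measure_ne_top μ _)] at hle0
      have : {ω | X ω = t} ⊆ {ω | X ω ≤ (0:ℝ)} := by
        intro ω hω; simp only [Set.mem_setOf_eq] at hω ⊢; rw [hω, ← h0]
      exact measure_mono_null this hle0'
    · exact cdf_no_atom μ X hXm t h0 F hFc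
        (fun s hs0 hst => hXF s ⟨hs0, le_trans hst ht1⟩)
  have atomξ : μ {ω | ξ ω = t} = 0 := by
    rcases eq_or_lt_of_le ht0 with h0 | h0
    · have h0' : μ {ω | ξ ω ≤ (0:ℝ)} = 0 := by
        have := hξpos
        rw [MeasureTheory.ae_iff] at this
        convert this using 2
        ext ω; simp [not_lt]
      have : {ω | ξ ω = t} ⊆ {ω | ξ ω ≤ (0:ℝ)} := by
        intro ω hω; simp only [Set.mem_setOf_eq] at hω ⊢; rw [hω, ← h0]
      exact measure_mono_null this h0'
    · exact cdf_no_atom μ ξ hξm t h0 (fun y => 1 - Real.exp (-lam * y))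
        (continuous_const.sub (Real.continuous_exp.comp (continuous_const.mul continuous_id)))
        (fun s hs0 _ => hξcdf s hs0)
  -- rewrite the event
  have hset : {ω | max (1 - X ω) (1 - ξ ω) ≤ x} = X ⁻¹' Set.Ici t ∩ ξ ⁻¹' Set.Ici t := by
    ext ω
    simp only [Set.mem_setOf_eq, max_le_iff, Set.mem_inter_iff, Set.mem_preimage, Set.mem_Ici,
      htdef]
    constructor
    · rintro ⟨h1, h2⟩; constructor <;> linarith
    · rintro ⟨h1, h2⟩; constructor <;> linarith
  have hmul := hindep.measure_inter_preimage_eq_mul (Set.Ici t) (Set.Ici t)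
    measurableSet_Ici measurableSet_Ici
  -- compute each factor
  have hcomplX : X ⁻¹' Set.Ici t = {ω | X ω < t}ᶜ := by
    ext ω; simp [not_lt]
  have hcomplξ : ξ ⁻¹' Set.Ici t = {ω | ξ ω < t}ᶜ := by
    ext ω; simp [not_lt]
  have hmX : MeasurableSet {ω | X ω < t} := hXm measurableSet_Iio
  have hmξ : MeasurableSet {ω | ξ ω < t} := hξm measurableSet_Iio
  have hA : (μ (X ⁻¹' Set.Ici t)).toReal = 1 - F t := by
    rw [hcomplX, measure_compl hmX (measure_ne_top μ _),
      measure_univ, meas_lt_eq_meas_le μ X t atomX,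
      ENNReal.toReal_sub_of_le prob_le_one ENNReal.one_ne_top, ENNReal.toReal_one,
      hXF t ⟨ht0, ht1⟩]
  have hB : (μ (ξ ⁻¹' Set.Ici t)).toReal = Real.exp (-lam * t) := by
    rw [hcomplξ, measure_compl hmξ (measure_ne_top μ _),
      measure_univ, meas_lt_eq_meas_le μ ξ t atomξ,
      ENNReal.toReal_sub_of_le prob_le_one ENNReal.one_ne_top, ENNReal.toReal_one,
      hξcdf t ht0]
    ring
  rw [hset, hmul, ENNReal.toReal_mul, hA, hB, hF, hF, htdef]
  have hne : Real.exp (lam * (1 - x)) ≠ 0 := Real.exp_ne_zero _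
  have hsplit : Real.exp lam = Real.exp (lam * (1 - x)) * Real.exp (lam * x) := by
    rw [← Real.exp_add]; ring_nf
  have hinv : Real.exp (-lam * (1 - x)) = (Real.exp (lam * (1 - x)))⁻¹ := by
    rw [← Real.exp_neg]; ring_nf
  rw [hinv]
  field_simp
  rw [hsplit]
  ring
end

section
/- If X^L, X^R are i.i.d. with distribution function F(x) = (e^{λx}-1)/(e^{λ}-1) on [0,1] and ξ ~ Exp(λ) independent, then E[ξ·1(ξ < min(X^L, X^R))] = (e^{2λ} - (λ² + 2)e^{λ} + 1)/(λ(e^{λ} - 1)²). -/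
open MeasureTheory Set

lemma calc1 (a : ℝ) (ha : a ≠ 0) :
    ∫ u in (0:ℝ)..1, u * Real.exp (a*u) = (Real.exp a * (a-1) + 1)/a^2 := by
  have h : ∀ u ∈ Set.uIcc (0:ℝ) 1, HasDerivAt (fun u => ((a*u - 1)/a^2) * Real.exp (a*u))
      (u * Real.exp (a*u)) u := by
    intro u _
    have h1 : HasDerivAt (fun u : ℝ => (a*u - 1)/a^2) (a/a^2) u := by
      simpa using ((hasDerivAt_id u).const_mul a).sub_const 1 |>.div_const (a^2)
    have h2 : HasDerivAt (fun u : ℝ => Real.exp (a*u)) (Real.exp (a*u) * a) u := by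
      simpa [mul_comm] using ((hasDerivAt_id u).const_mul a).exp
    have := h1.mul h2
    refine this.congr_deriv ?_
    field_simp
    ring
  rw [intervalIntegral.integral_eq_sub_of_hasDerivAt h]
  · field_simp
    simp only [mul_zero, Real.exp_zero]; ring
  · apply Continuous.intervalIntegrable
    continuity

lemma calc2 (lam x : ℝ) :
    ∫ u in (0:ℝ)..x, lam * Real.exp (-lam*u) = 1 - Real.exp (-lam*x) := by
  have h : ∀ u ∈ Set.uIcc (0:ℝ) x, HasDerivAt (fun u => -Real.exp (-lam*u))
      (lam * Real.exp (-lam*u)) u := by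
    intro u _
    have h2 : HasDerivAt (fun u : ℝ => Real.exp (-lam*u)) (Real.exp (-lam*u) * (-lam)) u := by
      simpa [mul_comm] using ((hasDerivAt_id u).const_mul (-lam)).exp
    refine h2.neg.congr_deriv ?_; ring
  rw [intervalIntegral.integral_eq_sub_of_hasDerivAt h]
  · simp only [mul_zero, neg_zero, Real.exp_zero]
    ring
  · apply Continuous.intervalIntegrable
    continuity

lemma calc3 (lam : ℝ) (hlam : 0 < lam) :
    ∫ u in (0:ℝ)..1,
      (lam * Real.exp (-lam*u)) * (u * ((Real.exp lam - Real.exp (lam*u))/(Real.exp lam - 1))^2)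
    = (Real.exp (2*lam) - (lam^2+2)*Real.exp lam + 1) / (lam * (Real.exp lam - 1)^2) := by
  have hL : (1:ℝ) < Real.exp lam := by
    calc (1:ℝ) = Real.exp 0 := Real.exp_zero.symm
    _ < Real.exp lam := Real.exp_lt_exp.mpr hlam
  have hL1 : Real.exp lam - 1 ≠ 0 := by linarith
  have hL0 : Real.exp lam ≠ 0 := Real.exp_ne_zero lam
  have hlam0 : lam ≠ 0 := ne_of_gt hlam
  set L := Real.exp lam with hLdef
  have hfun : (fun u => (lam * Real.exp (-lam*u)) * (u * ((L - Real.exp (lam*u))/(L-1))^2))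
      = fun u => (lam*L^2/(L-1)^2) * (u * Real.exp (-lam*u)) +
        ((-2*lam*L/(L-1)^2) * u + (lam/(L-1)^2) * (u * Real.exp (lam*u))) := by
    funext u
    have h : Real.exp (-lam*u) * Real.exp (lam*u) = 1 := by
      rw [← Real.exp_add]; ring_nf; exact Real.exp_zero
    rw [div_pow]
    linear_combination (lam * u * ((L-1)^2)⁻¹ * (Real.exp (lam*u) - 2*L)) * h
  rw [hfun, intervalIntegral.integral_add, intervalIntegral.integral_add,
    intervalIntegral.integral_const_mul, intervalIntegral.integral_const_mul,
    intervalIntegral.integral_const_mul, calc1 (-lam) (neg_ne_zero.mpr hlam0),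
    calc1 lam hlam0, integral_id]
  · have hE2 : Real.exp (2*lam) = L^2 := by rw [two_mul, Real.exp_add]; ring
    have hEn : Real.exp (-lam) = L⁻¹ := Real.exp_neg lam
    rw [hE2, hEn]
    field_simp
    ring
  · apply Continuous.intervalIntegrable; continuity
  · apply Continuous.intervalIntegrable; continuity
  · apply Continuous.intervalIntegrable; continuity
  · apply Continuous.intervalIntegrable; continuity

lemma aux_Ioi {Ω : Type*} [MeasurableSpace Ω] (μ : Measure Ω) [IsProbabilityMeasure μ]
    (lam : ℝ) (hlam : 0 < lam) (X : Ω → ℝ) (hXm : Measurable X)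
    (hX : ∀ x ∈ Set.Icc (0:ℝ) 1,
      (μ {ω | X ω ≤ x}).toReal = (Real.exp (lam*x)-1)/(Real.exp lam-1)) :
    ∀ u : ℝ, 0 < u → (μ.map X) (Set.Ioi u) =
      ENNReal.ofReal (if u ≤ 1 then (Real.exp lam - Real.exp (lam*u))/(Real.exp lam - 1) else 0) := by
  have hL : (1:ℝ) < Real.exp lam := by
    calc (1:ℝ) = Real.exp 0 := Real.exp_zero.symm
    _ < Real.exp lam := Real.exp_lt_exp.mpr hlam
  have hL1 : Real.exp lam - 1 ≠ 0 := by linarith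
  haveI : IsProbabilityMeasure (μ.map X) := Measure.isProbabilityMeasure_map hXm.aemeasurable
  have hIic : ∀ u : ℝ, (μ.map X) (Set.Iic u) = μ {ω | X ω ≤ u} := fun u => by
    rw [Measure.map_apply hXm measurableSet_Iic]; rfl
  have key : ∀ u : ℝ, 0 < u → u ≤ 1 → (μ.map X) (Set.Ioi u) =
      ENNReal.ofReal ((Real.exp lam - Real.exp (lam*u))/(Real.exp lam - 1)) := by
    intro u hu0 hu1
    have h1 : (μ.map X) (Set.Ioi u) = 1 - (μ.map X) (Set.Iic u) := by
      rw [← Set.compl_Iic, prob_compl_eq_one_sub measurableSet_Iic]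
    have htR : ((μ.map X) (Set.Ioi u)).toReal
        = 1 - (Real.exp (lam*u)-1)/(Real.exp lam-1) := by
      rw [h1, ENNReal.toReal_sub_of_le prob_le_one ENNReal.one_ne_top, ENNReal.toReal_one,
        hIic, hX u ⟨le_of_lt hu0, hu1⟩]
    have : (μ.map X) (Set.Ioi u) = ENNReal.ofReal (((μ.map X) (Set.Ioi u)).toReal) :=
      (ENNReal.ofReal_toReal (measure_ne_top _ _)).symm
    rw [this, htR]
    congr 1
    field_simp
    ring
  intro u hu0
  by_cases hu1 : u ≤ 1
  · rw [if_pos hu1]; exact key u hu0 hu1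
  · rw [if_neg hu1]
    have h1 : (μ.map X) (Set.Ioi 1) = 0 := by
      rw [key 1 one_pos le_rfl]
      simp [mul_one]
    have := measure_mono (μ := μ.map X) (Set.Ioi_subset_Ioi (le_of_lt (not_le.mp hu1)))
    simp [le_antisymm (h1 ▸ this) zero_le]

lemma aux_exp {Ω : Type*} [MeasurableSpace Ω] (μ : Measure Ω) [IsProbabilityMeasure μ]
    (lam : ℝ) (hlam : 0 < lam) (ξv : Ω → ℝ) (hξm : Measurable ξv)
    (hξpos : ∀ᵐ ω ∂μ, 0 < ξv ω)
    (hξcdf : ∀ x : ℝ, 0 ≤ x → (μ {ω | ξv ω ≤ x}).toReal = 1 - Real.exp (-lam * x)) :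
    μ.map ξv = (volume : Measure ℝ).withDensity
      (fun u => Set.indicator (Set.Ici 0) (fun u => ENNReal.ofReal (lam * Real.exp (-lam*u))) u) := by
  haveI : IsProbabilityMeasure (μ.map ξv) := Measure.isProbabilityMeasure_map hξm.aemeasurable
  refine Measure.ext_of_Iic _ _ (fun x => ?_)
  have hIic : (μ.map ξv) (Set.Iic x) = μ {ω | ξv ω ≤ x} := by
    rw [Measure.map_apply hξm measurableSet_Iic]; rfl
  rw [withDensity_apply _ measurableSet_Iic, lintegral_indicator measurableSet_Ici _,
    Measure.restrict_restrict measurableSet_Ici, Set.Ici_inter_Iic]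
  rcases le_or_gt 0 x with hx | hx
  · rw [hIic]
    have h1 : μ {ω | ξv ω ≤ x} = ENNReal.ofReal (1 - Real.exp (-lam*x)) := by
      rw [← hξcdf x hx, ENNReal.ofReal_toReal (measure_ne_top _ _)]
    rw [h1, ← ofReal_integral_eq_lintegral_ofReal]
    · congr 1
      rw [MeasureTheory.integral_Icc_eq_integral_Ioc,
        ← intervalIntegral.integral_of_le hx, calc2]
    · apply Continuous.integrableOn_Icc; continuity
    · exact Filter.Eventually.of_forall (fun u => by positivity)
  · have h0 : μ {ω | ξv ω ≤ x} = 0 := by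
      refine measure_mono_null (fun ω hω => ?_) (by rwa [← MeasureTheory.ae_iff] : μ {ω | ¬ 0 < ξv ω} = 0)
      exact not_lt.mpr (le_of_lt (lt_of_le_of_lt hω hx))
    rw [hIic, h0, Set.Icc_eq_empty (not_le.mpr hx)]
    simp

open ProbabilityTheory
open scoped ENNReal

theorem stmt_9 {Ω : Type*} [MeasurableSpace Ω] (μ : Measure Ω) [IsProbabilityMeasure μ]
    (lam : ℝ) (hlam : 0 < lam)
    (XL XR ξv : Ω → ℝ)
    (hXLm : Measurable XL) (hXRm : Measurable XR) (hξm : Measurable ξv)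
    (hindep : iIndepFun
      ![XL, XR, ξv] μ)
    (hXL01 : ∀ᵐ ω ∂μ, XL ω ∈ Set.Icc (0 : ℝ) 1)
    (hXR01 : ∀ᵐ ω ∂μ, XR ω ∈ Set.Icc (0 : ℝ) 1)
    (hXL : ∀ x ∈ Set.Icc (0 : ℝ) 1,
      (μ {ω | XL ω ≤ x}).toReal = (Real.exp (lam * x) - 1) / (Real.exp lam - 1))
    (hXR : ∀ x ∈ Set.Icc (0 : ℝ) 1,
      (μ {ω | XR ω ≤ x}).toReal = (Real.exp (lam * x) - 1) / (Real.exp lam - 1))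
    (hξpos : ∀ᵐ ω ∂μ, 0 < ξv ω)
    (hξcdf : ∀ x : ℝ, 0 ≤ x → (μ {ω | ξv ω ≤ x}).toReal = 1 - Real.exp (-lam * x)) :
    ∫ ω in {ω | ξv ω < min (XL ω) (XR ω)}, ξv ω ∂μ
      = (Real.exp (2 * lam) - (lam ^ 2 + 2) * Real.exp lam + 1)
          / (lam * (Real.exp lam - 1) ^ 2) := by
  classical
  have hL : (1:ℝ) < Real.exp lam := by
    calc (1:ℝ) = Real.exp 0 := Real.exp_zero.symm
    _ < Real.exp lam := Real.exp_lt_exp.mpr hlam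
  have hL1 : Real.exp lam - 1 ≠ 0 := by linarith
  set νL := μ.map XL with hνLdef
  set νR := μ.map XR with hνRdef
  set νξ := μ.map ξv with hνξdef
  haveI : IsProbabilityMeasure νL := Measure.isProbabilityMeasure_map hXLm.aemeasurable
  haveI : IsProbabilityMeasure νR := Measure.isProbabilityMeasure_map hXRm.aemeasurable
  haveI : IsProbabilityMeasure νξ := Measure.isProbabilityMeasure_map hξm.aemeasurable
  -- independence
  have hmeas : ∀ i, Measurable (![XL, XR, ξv] i) := by
    intro i
    fin_cases i
    · exact hXLm
    · exact hXRm
    · exact hξm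
  have hpair : IndepFun XL XR μ := hindep.indepFun (show (0:Fin 3) ≠ 1 by decide)
  have hPmk : IndepFun (fun ω => (XL ω, XR ω)) ξv μ :=
    hindep.indepFun_prodMk hmeas 0 1 2 (by decide) (by decide)
  have hmapW : μ.map (fun ω => ((XL ω, XR ω), ξv ω)) = (νL.prod νR).prod νξ := by
    rw [(indepFun_iff_map_prod_eq_prod_map_map ((hXLm.prodMk hXRm).aemeasurable)
      hξm.aemeasurable).mp hPmk,
      (indepFun_iff_map_prod_eq_prod_map_map hXLm.aemeasurable hXRm.aemeasurable).mp hpair]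
  have hS : MeasurableSet {ω | ξv ω < min (XL ω) (XR ω)} :=
    measurableSet_lt hξm (hXLm.min hXRm)
  set f : (ℝ × ℝ) × ℝ → ℝ := fun p => if p.2 < min p.1.1 p.1.2 then p.2 else 0 with hf
  have hfm : Measurable f :=
    Measurable.ite (measurableSet_lt measurable_snd
      ((measurable_fst.fst).min (measurable_fst.snd))) measurable_snd measurable_const
  have step1 : ∫ ω in {ω | ξv ω < min (XL ω) (XR ω)}, ξv ω ∂μ
      = ∫ ω, f ((XL ω, XR ω), ξv ω) ∂μ := by
    rw [← integral_indicator hS]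
    congr 1
  have step2 : ∫ ω, f ((XL ω, XR ω), ξv ω) ∂μ = ∫ p, f p ∂((νL.prod νR).prod νξ) := by
    rw [← hmapW,
      integral_map ((hXLm.prodMk hXRm).prodMk hξm).aemeasurable hfm.aestronglyMeasurable]
  have haeξ : ∀ᵐ p ∂((νL.prod νR).prod νξ), 0 < p.2 := by
    rw [MeasureTheory.ae_iff]
    have hset : {p : (ℝ×ℝ)×ℝ | ¬ 0 < p.2} = (Set.univ ×ˢ Set.Iic 0) := by
      ext p; simp [not_lt]
    rw [hset, Measure.prod_prod]
    have h0 : νξ (Set.Iic 0) = 0 := by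
      rw [hνξdef, Measure.map_apply hξm measurableSet_Iic]
      exact measure_mono_null (fun ω hω => not_lt.mpr hω) (MeasureTheory.ae_iff.mp hξpos)
    simp [h0]
  have hnn : 0 ≤ᵐ[(νL.prod νR).prod νξ] f := by
    filter_upwards [haeξ] with p hp
    simp only [hf]
    split_ifs
    · exact hp.le
    · exact le_rfl
  have step3 : ∫ p, f p ∂((νL.prod νR).prod νξ)
      = (∫⁻ p, ENNReal.ofReal (f p) ∂((νL.prod νR).prod νξ)).toReal :=
    integral_eq_lintegral_of_nonneg_ae hnn hfm.aestronglyMeasurable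
  have hfm' : Measurable (fun p : (ℝ×ℝ)×ℝ => ENNReal.ofReal (f p)) :=
    ENNReal.measurable_ofReal.comp hfm
  have step4 : ∫⁻ p, ENNReal.ofReal (f p) ∂((νL.prod νR).prod νξ)
      = ∫⁻ u, ENNReal.ofReal u * (νL (Set.Ioi u) * νR (Set.Ioi u)) ∂νξ := by
    rw [lintegral_prod_symm _ hfm'.aemeasurable]
    refine lintegral_congr (fun u => ?_)
    have hind : (fun xy : ℝ×ℝ => ENNReal.ofReal (f (xy, u)))
        = Set.indicator (Set.Ioi u ×ˢ Set.Ioi u) (fun _ => ENNReal.ofReal u) := by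
      funext xy
      simp only [hf, Set.indicator, Set.mem_prod, Set.mem_Ioi]
      by_cases h : u < min xy.1 xy.2
      · rw [if_pos h, if_pos ⟨(lt_min_iff.mp h).1, (lt_min_iff.mp h).2⟩]
      · rw [if_neg h, if_neg (fun hc => h (lt_min_iff.mpr hc)), ENNReal.ofReal_zero]
    rw [hind, lintegral_indicator (measurableSet_Ioi.prod measurableSet_Ioi),
      setLIntegral_const, Measure.prod_prod]
  -- identify the law of ξv
  have hξeq : νξ = (volume : Measure ℝ).withDensity
      (fun u => Set.indicator (Set.Ici 0) (fun u => ENNReal.ofReal (lam * Real.exp (-lam*u))) u) :=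
    hνξdef.trans (aux_exp μ lam hlam ξv hξm hξpos hξcdf)
  set dens : ℝ → ℝ≥0∞ :=
    fun u => Set.indicator (Set.Ici 0) (fun u => ENNReal.ofReal (lam * Real.exp (-lam*u))) u
    with hdens
  have hdensm : Measurable dens := by
    apply Measurable.indicator _ measurableSet_Ici
    exact ENNReal.measurable_ofReal.comp
      (measurable_const.mul (Real.measurable_exp.comp (measurable_id.const_mul (-lam))))
  set g : ℝ → ℝ≥0∞ := fun u => ENNReal.ofReal u * (νL (Set.Ioi u) * νR (Set.Ioi u)) with hg
  have hgm : Measurable g := by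
    apply Measurable.mul (ENNReal.measurable_ofReal.comp measurable_id)
    exact Measurable.mul
      (Antitone.measurable (fun a b hab => measure_mono (Set.Ioi_subset_Ioi hab)))
      (Antitone.measurable (fun a b hab => measure_mono (Set.Ioi_subset_Ioi hab)))
  set φ : ℝ → ℝ := fun u => (lam * Real.exp (-lam*u)) *
    (u * ((Real.exp lam - Real.exp (lam*u))/(Real.exp lam - 1))^2) with hφ
  have hLioi := aux_Ioi μ lam hlam XL hXLm hXL
  have hRioi := aux_Ioi μ lam hlam XR hXRm hXR
  have hφc : Continuous φ := by
    have c1 : Continuous fun u : ℝ => Real.exp (-lam*u) :=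
      Real.continuous_exp.comp (continuous_const.mul continuous_id)
    have c2 : Continuous fun u : ℝ => Real.exp (lam*u) :=
      Real.continuous_exp.comp (continuous_const.mul continuous_id)
    rw [hφ]
    exact (continuous_const.mul c1).mul
      (continuous_id.mul (((continuous_const.sub c2).div_const _).pow 2))
  have hptw : ∀ u : ℝ, (dens * g) u
      = Set.indicator (Set.Ioc (0:ℝ) 1) (fun u => ENNReal.ofReal (φ u)) u := by
    intro u
    simp only [Pi.mul_apply, hdens, hg, hφ]
    rcases lt_trichotomy u 0 with hu | hu | hu
    · rw [Set.indicator_of_notMem (show u ∉ Set.Ici (0:ℝ) from by simpa using hu.not_ge),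
        zero_mul,
        Set.indicator_of_notMem (show u ∉ Set.Ioc (0:ℝ) 1 from fun hc => absurd hc.1 (lt_asymm hu))]
    · subst hu
      rw [Set.indicator_of_notMem
        (show (0:ℝ) ∉ Set.Ioc (0:ℝ) 1 from fun hc => lt_irrefl 0 hc.1)]
      simp
    · rcases le_or_gt u 1 with hu1 | hu1
      · rw [Set.indicator_of_mem (show u ∈ Set.Ioc (0:ℝ) 1 from ⟨hu, hu1⟩),
          Set.indicator_of_mem (show u ∈ Set.Ici (0:ℝ) from hu.le),
          hLioi u hu, hRioi u hu, if_pos hu1]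
        have ha : (0:ℝ) ≤ lam * Real.exp (-lam*u) := by positivity
        have hgnn : (0:ℝ) ≤ (Real.exp lam - Real.exp (lam*u))/(Real.exp lam - 1) := by
          apply div_nonneg _ (by linarith)
          have : Real.exp (lam*u) ≤ Real.exp lam := Real.exp_le_exp.mpr (by nlinarith)
          linarith
        rw [show (lam * Real.exp (-lam*u)) *
            (u * ((Real.exp lam - Real.exp (lam*u))/(Real.exp lam - 1))^2)
          = (lam * Real.exp (-lam*u)) *
            (u * (((Real.exp lam - Real.exp (lam*u))/(Real.exp lam - 1))
            * ((Real.exp lam - Real.exp (lam*u))/(Real.exp lam - 1)))) by ring,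
          ENNReal.ofReal_mul ha, ENNReal.ofReal_mul hu.le, ENNReal.ofReal_mul hgnn]
      · rw [Set.indicator_of_notMem
          (show u ∉ Set.Ioc (0:ℝ) 1 from fun hc => absurd hc.2 hu1.not_ge),
          hLioi u hu, if_neg hu1.not_ge]
        simp
  have step5 : ∫⁻ u, g u ∂νξ = ENNReal.ofReal (∫ u in (0:ℝ)..1, φ u) := by
    rw [hξeq, lintegral_withDensity_eq_lintegral_mul volume hdensm hgm,
      lintegral_congr hptw, lintegral_indicator measurableSet_Ioc,
      ← ofReal_integral_eq_lintegral_ofReal]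
    · rw [← intervalIntegral.integral_of_le zero_le_one]
    · exact hφc.integrableOn_Ioc
    · refine (ae_restrict_iff' measurableSet_Ioc).mpr (Filter.Eventually.of_forall fun u hu => ?_)
      rw [hφ]
      exact mul_nonneg (by positivity) (mul_nonneg hu.1.le (sq_nonneg _))
  have hφnn : 0 ≤ ∫ u in (0:ℝ)..1, φ u := by
    apply intervalIntegral.integral_nonneg zero_le_one
    intro u hu
    rw [hφ]
    exact mul_nonneg (by positivity) (mul_nonneg hu.1 (sq_nonneg _))
  rw [step1, step2, step3, step4, step5, ENNReal.toReal_ofReal hφnn]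
  exact calc3 lam hlam
end

section
/- Let V ≥ 0 be a real-valued random variable such that P(0 < V < x) ≤ C·x for all x > 0, where C > 0. Then E[V] ≥ (P(V > 0))²/(2C). -/
open MeasureTheory

theorem stmt_18 {Ω : Type*} [MeasurableSpace Ω] (μ : Measure Ω) [IsProbabilityMeasure μ]
    (V : Ω → ℝ) (hVm : Measurable V) (hV0 : ∀ ω, 0 ≤ V ω)
    (C : ℝ) (hC : 0 < C)
    (hP : ∀ x : ℝ, 0 < x → (μ {ω | 0 < V ω ∧ V ω < x}).toReal ≤ C * x) :
    ENNReal.ofReal ((μ {ω | 0 < V ω}).toReal ^ 2 / (2 * C))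
      ≤ ∫⁻ ω, ENNReal.ofReal (V ω) ∂μ := by
  set p : ℝ := (μ {ω | 0 < V ω}).toReal with hp
  have hp0 : 0 ≤ p := ENNReal.toReal_nonneg
  -- Key pointwise bound: for t > 0, μ {t < V} ≥ p - C t
  have key : ∀ t : ℝ, 0 < t → ENNReal.ofReal (p - C * t) ≤ μ {ω | t < V ω} := by
    intro t ht
    have hsub : {ω | 0 < V ω} ⊆ {ω | t < V ω} ∪ {ω | 0 < V ω ∧ V ω ≤ t} := by
      intro ω hω
      rcases lt_or_ge t (V ω) with h | h
      · exact Or.inl h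
      · exact Or.inr ⟨hω, h⟩
    have h1 : μ {ω | 0 < V ω} ≤ μ {ω | t < V ω} + μ {ω | 0 < V ω ∧ V ω ≤ t} :=
      (measure_mono hsub).trans (measure_union_le _ _)
    have hle : (μ {ω | 0 < V ω ∧ V ω ≤ t}).toReal ≤ C * t := by
      apply le_of_forall_pos_le_add
      intro ε hε
      have hx : 0 < t + ε / C := by positivity
      have hsub2 : {ω | 0 < V ω ∧ V ω ≤ t} ⊆ {ω | 0 < V ω ∧ V ω < t + ε / C} := by
        intro ω ⟨h1, h2⟩
        exact ⟨h1, lt_of_le_of_lt h2 (by have := div_pos hε hC; linarith)⟩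
      have := (ENNReal.toReal_mono (measure_ne_top μ _) (measure_mono hsub2)).trans
        (hP _ hx)
      calc (μ {ω | 0 < V ω ∧ V ω ≤ t}).toReal ≤ C * (t + ε / C) := this
        _ = C * t + ε := by field_simp
    have h2 : p ≤ (μ {ω | t < V ω}).toReal + C * t := by
      have := ENNReal.toReal_mono (by
        exact ENNReal.add_ne_top.mpr ⟨measure_ne_top μ _, measure_ne_top μ _⟩) h1
      rw [ENNReal.toReal_add (measure_ne_top μ _) (measure_ne_top μ _)] at this
      linarith
    have h3 : p - C * t ≤ (μ {ω | t < V ω}).toReal := by linarith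
    calc ENNReal.ofReal (p - C * t) ≤ ENNReal.ofReal ((μ {ω | t < V ω}).toReal) :=
          ENNReal.ofReal_le_ofReal h3
      _ = μ {ω | t < V ω} := ENNReal.ofReal_toReal (measure_ne_top μ _)
  -- Layer cake
  have hlc : ∫⁻ ω, ENNReal.ofReal (V ω) ∂μ = ∫⁻ t in Set.Ioi (0:ℝ), μ {ω | t < V ω} := by
    exact lintegral_eq_lintegral_meas_lt μ (Filter.Eventually.of_forall hV0) hVm.aemeasurable
  set a : ℝ := p / C with ha
  have ha0 : 0 ≤ a := by positivity
  -- Compute the real integral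
  have hint : ∫ t in Set.Ioc (0:ℝ) a, (p - C * t) = p ^ 2 / (2 * C) := by
    rw [← intervalIntegral.integral_of_le ha0]
    have : ∫ t in (0:ℝ)..a, (p - C * t) = p * a - C * (a ^ 2 / 2) := by
      rw [intervalIntegral.integral_sub (intervalIntegrable_const)
        ((intervalIntegral.intervalIntegrable_id).const_mul C),
        intervalIntegral.integral_const_mul, integral_id, intervalIntegral.integral_const]
      simp only [smul_eq_mul, sub_zero]
      ring
    rw [this, ha]
    field_simp
    ring
  have hnn : ∀ t ∈ Set.Ioc (0:ℝ) a, 0 ≤ p - C * t := by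
    intro t ⟨ht1, ht2⟩
    have : C * t ≤ C * a := by nlinarith
    have : C * a = p := by rw [ha]; field_simp
    nlinarith [mul_le_mul_of_nonneg_left ht2 hC.le]
  have hintg : IntegrableOn (fun t => p - C * t) (Set.Ioc (0:ℝ) a) := by
    apply Continuous.integrableOn_Ioc
    continuity
  calc ENNReal.ofReal (p ^ 2 / (2 * C))
      = ENNReal.ofReal (∫ t in Set.Ioc (0:ℝ) a, (p - C * t)) := by rw [hint]
    _ = ∫⁻ t in Set.Ioc (0:ℝ) a, ENNReal.ofReal (p - C * t) := by
        apply ofReal_integral_eq_lintegral_ofReal hintg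
        exact (ae_restrict_iff' measurableSet_Ioc).mpr (Filter.Eventually.of_forall hnn)
    _ ≤ ∫⁻ t in Set.Ioc (0:ℝ) a, μ {ω | t < V ω} := by
        apply lintegral_mono_ae
        exact (ae_restrict_iff' measurableSet_Ioc).mpr
          (Filter.Eventually.of_forall (fun t ht => key t ht.1))
    _ ≤ ∫⁻ t in Set.Ioi (0:ℝ), μ {ω | t < V ω} :=
        lintegral_mono_set Set.Ioc_subset_Ioi_self
    _ = ∫⁻ ω, ENNReal.ofReal (V ω) ∂μ := hlc.symm
end
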